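/- Let F be an n × n matrix with entries in ℂ[X] such that det F is not the zero polynomial, and let a ∈ ℂ. Then the rank deficiency of the evaluated matrix satisfies n − rank(F(a)) ≤ ν, where ν is the multiplicity of a as a root of det F. (In particular, the rank deficiency r_k of F(λ_k) at an eigenvalue λ_k of multiplicity ν_k satisfies r_k ≤ ν_k.) -/

import Mathlib

open Polynomial Matrix

private lemma pow_dvd_det_of_cols {R : Type*} [CommRing R] {n : ℕ}
    (p : R) (S : Finset (Fin n)) :
    ∀ (A : Matrix (Fin n) (Fin n) R), (∀ j ∈ S, ∀ i, p ∣ A i j) → p ^ S.card ∣ A.det := by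
  classical
  induction S using Finset.induction with
  | empty => simp
  | @insert j S hj ih =>
    intro A hA
    choose w hw using fun i => hA j (Finset.mem_insert_self j S) i
    have hAcol : A = Matrix.updateCol A j (fun i => p * w i) := by
      ext i j'
      by_cases h : j' = j
      · subst h; simp [Matrix.updateCol_apply, ← hw]
      · simp [Matrix.updateCol_apply, h]
    have h1 : A.det = p * (Matrix.updateCol A j w).det := by
      conv_lhs => rw [hAcol]
      have := Matrix.det_updateCol_smul A j p w
      simpa [Pi.smul_def, smul_eq_mul] using this
    have h2 : p ^ S.card ∣ (Matrix.updateCol A j w).det := by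
      apply ih
      intro j' hj' i
      have hne : j' ≠ j := fun h => hj (h ▸ hj')
      rw [Matrix.updateCol_apply, if_neg hne]
      exact hA j' (Finset.mem_insert_of_mem hj') i
    rw [Finset.card_insert_of_notMem hj, h1, pow_succ']
    exact mul_dvd_mul dvd_rfl h2

theorem rank_deficiency_le_multiplicity {n : ℕ}
    (F : Matrix (Fin n) (Fin n) (Polynomial ℂ)) (hF : F.det ≠ 0) (a : ℂ) :
    n - (F.map (fun p => p.eval a)).rank ≤ Polynomial.rootMultiplicity a F.det := by
  classical
  set A : Matrix (Fin n) (Fin n) ℂ := F.map (fun p => p.eval a) with hAdef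
  set K : Submodule ℂ (Fin n → ℂ) := LinearMap.ker A.mulVecLin with hK
  set k : ℕ := Module.finrank ℂ K with hk
  -- rank-nullity
  have hrn : A.rank + k = n := by
    have := LinearMap.finrank_range_add_finrank_ker A.mulVecLin
    simpa [Matrix.rank, Module.finrank_pi] using this
  have hle : n - A.rank ≤ k := by omega
  -- it suffices to show (X - C a) ^ k ∣ F.det
  suffices h : (X - C a) ^ k ∣ F.det by
    have := (Polynomial.le_rootMultiplicity_iff hF).mpr h
    omega
  -- build a basis whose first k vectors are in K
  obtain ⟨Q, hQ⟩ := Submodule.exists_isCompl K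
  set k' : ℕ := Module.finrank ℂ Q with hk'
  have bk : Module.Basis (Fin k) ℂ K := Module.finBasis ℂ K
  have bq : Module.Basis (Fin k') ℂ Q := Module.finBasis ℂ Q
  let e : (K × Q) ≃ₗ[ℂ] (Fin n → ℂ) := Submodule.prodEquivOfIsCompl K Q hQ
  let B : Module.Basis (Fin k ⊕ Fin k') ℂ (Fin n → ℂ) := (bk.prod bq).map e
  have hcard : Fintype.card (Fin k ⊕ Fin k') = Fintype.card (Fin n) := by
    simpa using (Module.finrank_eq_card_basis B).symm.trans (by simp [Module.finrank_pi])
  let g : Fin k ⊕ Fin k' ≃ Fin n := Fintype.equivOfCardEq hcard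
  let B' : Module.Basis (Fin n) ℂ (Fin n → ℂ) := B.reindex g
  let M : Matrix (Fin n) (Fin n) ℂ := (Pi.basisFun ℂ (Fin n)).toMatrix ⇑B'
  have hM : ∀ i j, M i j = B' j i := by
    intro i j
    simp [M, Module.Basis.toMatrix_apply]
  have hMdet : IsUnit M.det := by
    have : Invertible M := (Pi.basisFun ℂ (Fin n)).invertibleToMatrix B'
    exact (Matrix.isUnit_iff_isUnit_det M).mp (isUnit_of_invertible M)
  -- key divisibility
  set S : Finset (Fin n) := Finset.univ.image (fun i : Fin k => g (Sum.inl i)) with hS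
  have hScard : S.card = k := by
    rw [hS, Finset.card_image_of_injective _ (fun i j h => Sum.inl.inj (g.injective h))]
    simp
  have hker : ∀ i : Fin k, B' (g (Sum.inl i)) ∈ K := by
    intro i
    have : B' (g (Sum.inl i)) = B (Sum.inl i) := by
      simp [B', Module.Basis.reindex_apply]
    rw [this]
    have hB : B (Sum.inl i) = e (bk.prod bq (Sum.inl i)) := by simp [B]
    have hfst : (bk.prod bq (Sum.inl i)).1 = bk i := Module.Basis.prod_apply_inl_fst bk bq i
    have hsnd : (bk.prod bq (Sum.inl i)).2 = 0 := Module.Basis.prod_apply_inl_snd bk bq i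
    have he : e (bk.prod bq (Sum.inl i)) = ↑(bk i) + ↑((bk.prod bq (Sum.inl i)).2) := by
      rw [← hfst]
      rfl
    rw [hB, he, hsnd]
    simp
  have hdvd : (X - C a) ^ k ∣ (F * M.map C).det := by
    rw [← hScard]
    apply pow_dvd_det_of_cols
    intro j hj i
    rw [hS, Finset.mem_image] at hj
    obtain ⟨i0, -, rfl⟩ := hj
    rw [Polynomial.dvd_iff_isRoot]
    have hcol : A.mulVec (fun l => M l (g (Sum.inl i0))) = 0 := by
      have hm : (fun l => M l (g (Sum.inl i0))) = B' (g (Sum.inl i0)) := by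
        funext l; exact hM l _
      rw [hm]
      exact hker i0
    have : ((F * M.map C) i (g (Sum.inl i0))).eval a
        = A.mulVec (fun l => M l (g (Sum.inl i0))) i := by
      simp [Matrix.mul_apply, Matrix.mulVec, dotProduct, hAdef, Matrix.map_apply,
        Polynomial.eval_finset_sum]
    rw [Polynomial.IsRoot, this, hcol]
    rfl
  -- conclude
  rw [Matrix.det_mul] at hdvd
  have hMc : IsUnit (M.map C).det := by
    have h := hMdet.map (C : ℂ →+* ℂ[X])
    rwa [RingHom.map_det] at h
  exact (IsUnit.dvd_mul_right hMc).mp hdvd
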